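/- Let f : ℝⁿ → ℝ be differentiable with L-Lipschitz gradient and ‖∇f(y)‖ ≤ γ for all y ∈ Ω. Let x ∈ Ω and Δ > 0, set I⁺ = {i : u_i − x_i ≤ Δ} and I⁻ = {i : x_i − l_i ≤ Δ}, assume I⁺ and I⁻ are disjoint, and let G = {−e_i : i ∈ I⁺} ∪ {e_i : i ∈ I⁻} ∪ {e_i, −e_i : i ∉ I⁺ ∪ I⁻}. If for every d ∈ G the inequality f(x) ≤ f(x + Δd) + Δ² holds (i.e., no search direction attains the sufficient decrease f(x + Δd) < f(x) − Δ²), then χ(x) ≤ √n · (L + γ + 1) · Δ. (The paper states the bound √n(L+γ)Δ, inadvertently dropping the additive term √nΔ coming from the backtracking test; the provable constant is √n(L+γ+1).) -/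

import Mathlib

/-- Main global-convergence bound: if no search direction in G attains the sufficient
  decrease f(x + Δd) < f(x) − Δ², then χ(x) ≤ √n · (L + γ + 1) · Δ. -/
theorem stmt_11 (n : ℕ) (hn : 1 ≤ n)
    (l u : Fin n → ℝ) (hlu : ∀ i, l i < u i)
    (Ω : Set (EuclideanSpace ℝ (Fin n)))
    (hΩ : Ω = {y | ∀ i, l i ≤ y i ∧ y i ≤ u i})
    (f : EuclideanSpace ℝ (Fin n) → ℝ)
    (hdiff : Differentiable ℝ f)
    (L : ℝ)
    (hLip : ∀ y z : EuclideanSpace ℝ (Fin n),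
      ‖gradient f y - gradient f z‖ ≤ L * ‖y - z‖)
    (γ : ℝ) (hγ : ∀ y ∈ Ω, ‖gradient f y‖ ≤ γ)
    (x : EuclideanSpace ℝ (Fin n)) (hx : x ∈ Ω)
    (Δ : ℝ) (hΔ : 0 < Δ)
    (Ip Im : Set (Fin n))
    (hIp : Ip = {i | u i - x i ≤ Δ}) (hIm : Im = {i | x i - l i ≤ Δ})
    (hdisj : Disjoint Ip Im)
    (G : Set (EuclideanSpace ℝ (Fin n)))
    (hG : G = {d | (∃ i ∈ Ip, d = -(EuclideanSpace.single i (1 : ℝ)))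
        ∨ (∃ i ∈ Im, d = EuclideanSpace.single i (1 : ℝ))
        ∨ (∃ i, i ∉ Ip ∧ i ∉ Im ∧
            (d = EuclideanSpace.single i (1 : ℝ) ∨ d = -(EuclideanSpace.single i (1 : ℝ))))})
    (hfail : ∀ d ∈ G, f x ≤ f (x + Δ • d) + Δ ^ 2)
    (χ : ℝ)
    (hχ : χ = sSup {r : ℝ | ∃ ω : EuclideanSpace ℝ (Fin n),
        x + ω ∈ Ω ∧ ‖ω‖ ≤ 1 ∧ r = -(inner ℝ (gradient f x) ω : ℝ)}) :
    χ ≤ Real.sqrt n * (L + γ + 1) * Δ := by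
  classical
  set g := gradient f x with hgdef
  -- nonnegativity of L and γ
  have hL0 : 0 ≤ L := by
    have i0 : Fin n := ⟨0, hn⟩
    have h1 : ‖(EuclideanSpace.single i0 (1:ℝ)) - 0‖ = 1 := by
      rw [sub_zero, EuclideanSpace.norm_single]; norm_num
    have := hLip (EuclideanSpace.single i0 (1:ℝ)) 0
    rw [h1, mul_one] at this
    exact le_trans (norm_nonneg _) this
  have hγ0 : 0 ≤ γ := le_trans (norm_nonneg _) (hγ x hx)
  -- link between fderiv and gradient
  have hfd : ∀ y : EuclideanSpace ℝ (Fin n),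
      fderiv ℝ f y = InnerProductSpace.toDual ℝ _ (gradient f y) := fun y =>
    ((InnerProductSpace.toDual ℝ _).apply_symm_apply _).symm
  -- key estimate for unit directions in G
  have key : ∀ d : EuclideanSpace ℝ (Fin n), ‖d‖ = 1 → f x ≤ f (x + Δ • d) + Δ ^ 2 →
      -(inner ℝ g d : ℝ) ≤ (1 + L) * Δ := by
    intro d hd hf1
    set y := x + Δ • d with hy
    have hyx : y - x = Δ • d := by rw [hy]; abel
    have hnyx : ‖y - x‖ = Δ := by
      rw [hyx, norm_smul, hd, mul_one, Real.norm_eq_abs, abs_of_pos hΔ]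
    have hball : y ∈ Metric.closedBall x Δ := by
      rw [Metric.mem_closedBall, dist_eq_norm, hnyx]
    have hquad : ‖f y - f x - (fderiv ℝ f x) (y - x)‖ ≤ (L * Δ) * ‖y - x‖ := by
      apply Convex.norm_image_sub_le_of_norm_fderiv_le'
        (fun z _ => hdiff z) ?_ (convex_closedBall x Δ)
        (Metric.mem_closedBall_self hΔ.le) hball
      intro z hz
      rw [hfd z, hfd x, ← map_sub, (InnerProductSpace.toDual ℝ _).norm_map]
      calc ‖gradient f z - gradient f x‖ ≤ L * ‖z - x‖ := hLip z x
        _ ≤ L * Δ := by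
            apply mul_le_mul_of_nonneg_left _ hL0
            rwa [Metric.mem_closedBall, dist_eq_norm] at hz
    have hlin : (fderiv ℝ f x) (y - x) = Δ * (inner ℝ g d : ℝ) := by
      rw [hfd, InnerProductSpace.toDual_apply_apply, hyx, real_inner_smul_right]
    rw [hlin, hnyx, Real.norm_eq_abs] at hquad
    have habs := abs_le.mp hquad
    have h2 : -(Δ * (inner ℝ g d : ℝ)) ≤ Δ ^ 2 + L * Δ * Δ := by
      have := habs.1
      have hfy : f x - f y ≤ Δ ^ 2 := by linarith [hf1]
      linarith
    have : -(inner ℝ g d : ℝ) * Δ ≤ ((1 + L) * Δ) * Δ := by nlinarith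
    exact le_of_mul_le_mul_right this hΔ
  -- coordinatewise bounds on g
  have hsingle : ∀ i : Fin n, (inner ℝ g (EuclideanSpace.single i (1:ℝ)) : ℝ) = g i := by
    intro i; simp [EuclideanSpace.inner_single_right]
  have hnormsingle : ∀ i : Fin n, ‖EuclideanSpace.single i (1:ℝ)‖ = 1 := by
    intro i; rw [EuclideanSpace.norm_single]; norm_num
  have hIp' : ∀ i ∈ Ip, g i ≤ (1 + L) * Δ := by
    intro i hi
    have hmem : -(EuclideanSpace.single i (1:ℝ)) ∈ G := by
      rw [hG]; exact Or.inl ⟨i, hi, rfl⟩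
    have := key _ (by rw [norm_neg]; exact hnormsingle i) (hfail _ hmem)
    rwa [inner_neg_right, neg_neg, hsingle] at this
  have hIm' : ∀ i ∈ Im, -(g i) ≤ (1 + L) * Δ := by
    intro i hi
    have hmem : (EuclideanSpace.single i (1:ℝ)) ∈ G := by
      rw [hG]; exact Or.inr (Or.inl ⟨i, hi, rfl⟩)
    have := key _ (hnormsingle i) (hfail _ hmem)
    rwa [hsingle] at this
  have hFree : ∀ i, i ∉ Ip → i ∉ Im → |g i| ≤ (1 + L) * Δ := by
    intro i h1 h2
    have hmem1 : (EuclideanSpace.single i (1:ℝ)) ∈ G := by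
      rw [hG]; exact Or.inr (Or.inr ⟨i, h1, h2, Or.inl rfl⟩)
    have hmem2 : -(EuclideanSpace.single i (1:ℝ)) ∈ G := by
      rw [hG]; exact Or.inr (Or.inr ⟨i, h1, h2, Or.inr rfl⟩)
    have ha := key _ (hnormsingle i) (hfail _ hmem1)
    have hb := key _ (by rw [norm_neg]; exact hnormsingle i) (hfail _ hmem2)
    rw [hsingle] at ha
    rw [inner_neg_right, neg_neg, hsingle] at hb
    exact abs_le.mpr ⟨by linarith, hb⟩
  -- bound the supremum
  have hBnn : 0 ≤ Real.sqrt n * (L + γ + 1) * Δ :=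
    mul_nonneg (mul_nonneg (Real.sqrt_nonneg _) (by linarith)) hΔ.le
  rw [hχ]
  apply Real.sSup_le _ hBnn
  rintro r ⟨ω, hωΩ, hωn, rfl⟩
  rw [hΩ] at hωΩ
  have hωc : ∀ i, l i - x i ≤ ω i ∧ ω i ≤ u i - x i := by
    intro i
    have h := hωΩ i
    have he : (x + ω) i = x i + ω i := rfl
    rw [he] at h
    constructor <;> [linarith [h.1]; linarith [h.2]]
  -- split of ω
  set P : Fin n → Prop := fun i => (i ∈ Ip ∧ 0 ≤ ω i) ∨ (i ∈ Im ∧ ω i ≤ 0) with hP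
  set ω1 : EuclideanSpace ℝ (Fin n) := WithLp.toLp 2 (fun i => if P i then ω i else 0) with hω1def
  set ω2 : EuclideanSpace ℝ (Fin n) := ω - ω1 with hω2def
  have hω2i : ∀ i, ω2 i = ω i - ω1 i := fun i => rfl
  have hω1small : ∀ i, |ω1 i| ≤ Δ := by
    intro i
    rw [hω1def]
    by_cases hi : P i
    · simp only [hi, if_true]
      rcases hi with ⟨hip, h0⟩ | ⟨him, h0⟩
      · rw [hIp] at hip
        rw [abs_of_nonneg h0]
        exact le_trans (hωc i).2 hip
      · rw [hIm] at him
        rw [abs_of_nonpos h0]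
        have := (hωc i).1
        simp only [Set.mem_setOf_eq] at him
        linarith
    · simp [hi, hΔ.le]
  have hnω1 : ‖ω1‖ ≤ Real.sqrt n * Δ := by
    rw [EuclideanSpace.norm_eq]
    have hsum : ∑ i, ‖ω1 i‖ ^ 2 ≤ ∑ _i : Fin n, Δ ^ 2 := by
      apply Finset.sum_le_sum
      intro i _
      rw [Real.norm_eq_abs]
      exact pow_le_pow_left₀ (abs_nonneg _) (hω1small i) 2
    calc Real.sqrt (∑ i, ‖ω1 i‖ ^ 2) ≤ Real.sqrt (n * Δ ^ 2) := by
          apply Real.sqrt_le_sqrt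
          simpa using hsum
      _ = Real.sqrt n * Δ := by
          rw [Real.sqrt_mul (Nat.cast_nonneg n), Real.sqrt_sq hΔ.le]
  -- bound on inner g ω1
  have hbd1 : -(inner ℝ g ω1 : ℝ) ≤ γ * (Real.sqrt n * Δ) := by
    calc -(inner ℝ g ω1 : ℝ) ≤ |(inner ℝ g ω1 : ℝ)| := neg_le_abs _
      _ ≤ ‖g‖ * ‖ω1‖ := abs_real_inner_le_norm g ω1
      _ ≤ γ * (Real.sqrt n * Δ) :=
          mul_le_mul (hγ x hx) hnω1 (norm_nonneg _) hγ0
  -- bound on inner g ω2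
  have hcoord : ∀ i, -(g i * ω2 i) ≤ ((1 + L) * Δ) * |ω i| := by
    intro i
    have h1LΔ : 0 ≤ (1 + L) * Δ := mul_nonneg (by linarith) hΔ.le
    by_cases hi : P i
    · have : ω2 i = 0 := by rw [hω2i, hω1def]; simp [hi]
      rw [this, mul_zero, neg_zero]
      positivity
    · have hz : ω1 i = 0 := by rw [hω1def]; simp [hi]
      rw [hω2i, hz, sub_zero]
      have hnot1 : ¬(i ∈ Ip ∧ 0 ≤ ω i) := fun h => hi (Or.inl h)
      have hnot2 : ¬(i ∈ Im ∧ ω i ≤ 0) := fun h => hi (Or.inr h)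
      by_cases h1 : i ∈ Ip
      · have hneg : ω i < 0 := lt_of_not_ge (fun h => hnot1 ⟨h1, h⟩)
        have hgi := hIp' i h1
        rw [abs_of_neg hneg]
        nlinarith
      · by_cases h2 : i ∈ Im
        · have hpos : 0 < ω i := lt_of_not_ge (fun h => hnot2 ⟨h2, h⟩)
          have hgi := hIm' i h2
          rw [abs_of_pos hpos]
          nlinarith
        · have hgi := hFree i h1 h2
          calc -(g i * ω i) ≤ |g i * ω i| := neg_le_abs _
            _ = |g i| * |ω i| := abs_mul _ _
            _ ≤ ((1 + L) * Δ) * |ω i| :=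
                mul_le_mul_of_nonneg_right hgi (abs_nonneg _)
  have habs_sum : ∑ i, |ω i| ≤ Real.sqrt n := by
    set a : EuclideanSpace ℝ (Fin n) := WithLp.toLp 2 (fun i => |ω i|) with hadef
    set b : EuclideanSpace ℝ (Fin n) := WithLp.toLp 2 (fun _ => 1) with hbdef
    have hai : ∀ i, a i = |ω i| := fun i => rfl
    have hbi : ∀ i, b i = 1 := fun i => rfl
    have hcs := real_inner_le_norm a b
    have h1 : (inner ℝ a b : ℝ) = ∑ i, |ω i| := by
      rw [PiLp.inner_apply]
      apply Finset.sum_congr rfl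
      intro i _
      simp [RCLike.inner_apply, hai i, hbi i]
    have h2 : ‖a‖ = ‖ω‖ := by
      rw [EuclideanSpace.norm_eq, EuclideanSpace.norm_eq]
      congr 1
      apply Finset.sum_congr rfl
      intro i _
      rw [hai, Real.norm_eq_abs, Real.norm_eq_abs, abs_abs]
    have h3 : ‖b‖ = Real.sqrt n := by
      rw [EuclideanSpace.norm_eq]
      have hb1 : ∀ i : Fin n, ‖b i‖ ^ 2 = 1 := by intro i; rw [hbi i]; norm_num
      rw [Finset.sum_congr rfl fun i _ => hb1 i]
      simp
    rw [h1, h2, h3] at hcs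
    calc ∑ i, |ω i| ≤ ‖ω‖ * Real.sqrt n := hcs
      _ ≤ 1 * Real.sqrt n := mul_le_mul_of_nonneg_right hωn (Real.sqrt_nonneg _)
      _ = Real.sqrt n := one_mul _
  have hbd2 : -(inner ℝ g ω2 : ℝ) ≤ ((1 + L) * Δ) * Real.sqrt n := by
    have hinner2 : (inner ℝ g ω2 : ℝ) = ∑ i, g i * ω2 i := by
      simp [PiLp.inner_apply, RCLike.inner_apply, mul_comm]
    rw [hinner2, ← Finset.sum_neg_distrib]
    calc ∑ i, -(g i * ω2 i) ≤ ∑ i, ((1 + L) * Δ) * |ω i| :=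
          Finset.sum_le_sum fun i _ => hcoord i
      _ = ((1 + L) * Δ) * ∑ i, |ω i| := by rw [Finset.mul_sum]
      _ ≤ ((1 + L) * Δ) * Real.sqrt n :=
          mul_le_mul_of_nonneg_left habs_sum (mul_nonneg (by linarith) hΔ.le)
  -- combine
  have hsplit : (inner ℝ g ω : ℝ) = (inner ℝ g ω1 : ℝ) + (inner ℝ g ω2 : ℝ) := by
    rw [← inner_add_right]
    congr 1
    rw [hω2def]
    abel
  rw [hsplit]
  have : γ * (Real.sqrt n * Δ) + ((1 + L) * Δ) * Real.sqrt n
      = Real.sqrt n * (L + γ + 1) * Δ := by ring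
  linarith [hbd1, hbd2]
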